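/- Let n ≥ 2, d ≥ 2, P_d = [n]^d, and L_d the set of axis-parallel grid lines intersecting P_d. Define f : P_d → ℝ^2 by f(x) = (Σ_{i=1}^d ε^{i−1} x_i, Σ_{i=1}^d ε^{d−i} x_i) where ε = 1/(n+1), and for each L ∈ L_d let g(L) be the smallest axis-parallel rectangle in ℝ^2 containing f(P_d ∩ L). Then f is injective, and for all x ∈ P_d and L ∈ L_d: x ∈ L if and only if f(x) ∈ g(L). -/
import Mathlib

private lemma gl_mono {d : ℕ} (ε : ℝ) (hε : 0 ≤ ε) (e : Fin d → ℕ) (x y : Fin d → ℕ)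
    (h : ∀ j, x j ≤ y j) :
    ∑ j : Fin d, ε ^ e j * (x j : ℝ) ≤ ∑ j : Fin d, ε ^ e j * (y j : ℝ) := by
  apply Finset.sum_le_sum
  intro j _
  have hj : (x j : ℝ) ≤ (y j : ℝ) := by exact_mod_cast h j
  have : (0:ℝ) ≤ ε ^ e j := pow_nonneg hε _
  nlinarith

private lemma gl_lex {d n : ℕ} (hn : 2 ≤ n) (x y : Fin d → ℕ)
    (hx : ∀ j, x j ≤ n) (j₀ : Fin d) (hlt : x j₀ < y j₀)
    (hagree : ∀ j, j < j₀ → x j = y j) :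
    ∑ j : Fin d, (1 / (n + 1) : ℝ) ^ (j : ℕ) * x j
      < ∑ j : Fin d, (1 / (n + 1) : ℝ) ^ (j : ℕ) * y j := by
  set ε : ℝ := 1 / (n + 1) with hεdef
  have hnR : (2:ℝ) ≤ (n:ℝ) := by exact_mod_cast hn
  have hε0 : 0 < ε := by rw [hεdef]; positivity
  have hε1 : ε < 1 := by
    rw [hεdef, div_lt_one (by linarith)]; linarith
  classical
  set A : Finset (Fin d) := Finset.univ.filter (fun j => j ≤ j₀) with hA
  set B : Finset (Fin d) := Finset.univ.filter (fun j => ¬ j ≤ j₀) with hB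
  have hsplit : ∀ z : Fin d → ℕ,
      ∑ j : Fin d, ε ^ (j : ℕ) * (z j : ℝ)
        = ∑ j ∈ A, ε ^ (j : ℕ) * (z j : ℝ) + ∑ j ∈ B, ε ^ (j : ℕ) * (z j : ℝ) := by
    intro z
    rw [hA, hB, Finset.sum_filter_add_sum_filter_not]
  -- Step 2 : gap on A
  have hj₀A : j₀ ∈ A := by simp [hA]
  have h2 : ∑ j ∈ A, ε ^ (j : ℕ) * (x j : ℝ) + ε ^ (j₀ : ℕ)
      ≤ ∑ j ∈ A, ε ^ (j : ℕ) * (y j : ℝ) := by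
    have hsingle := Finset.single_le_sum
      (f := fun j : Fin d => ε ^ (j : ℕ) * (y j : ℝ) - ε ^ (j : ℕ) * (x j : ℝ))
      (fun j hj => by
        show (0:ℝ) ≤ ε ^ (j:ℕ) * (y j : ℝ) - ε ^ (j:ℕ) * (x j : ℝ)
        rcases lt_or_eq_of_le ((Finset.mem_filter.mp hj).2) with h | h
        · rw [hagree j h]; simp
        · subst h
          have : (x j : ℝ) ≤ (y j : ℝ) := by exact_mod_cast hlt.le
          have : (0:ℝ) ≤ ε ^ (j:ℕ) := by positivity
          nlinarith) hj₀A
    have hstep : ε ^ (j₀ : ℕ) ≤ ε ^ (j₀ : ℕ) * (y j₀ : ℝ) - ε ^ (j₀ : ℕ) * (x j₀ : ℝ) := by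
      have : (x j₀ : ℝ) + 1 ≤ (y j₀ : ℝ) := by exact_mod_cast hlt
      have h0 : (0:ℝ) < ε ^ (j₀:ℕ) := by positivity
      nlinarith
    have := hstep.trans hsingle
    rw [Finset.sum_sub_distrib] at this
    linarith
  -- Step 3 : the tail is small
  have h3 : ∑ j ∈ B, ε ^ (j : ℕ) * (x j : ℝ) < ε ^ (j₀ : ℕ) := by
    have hb1 : ∑ j ∈ B, ε ^ (j : ℕ) * (x j : ℝ) ≤ (n:ℝ) * ∑ j ∈ B, ε ^ (j : ℕ) := by
      rw [Finset.mul_sum]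
      apply Finset.sum_le_sum
      intro j _
      have hxj : (x j : ℝ) ≤ (n : ℝ) := by exact_mod_cast hx j
      have : (0:ℝ) ≤ ε ^ (j:ℕ) := by positivity
      nlinarith
    have hb2 : ∑ j ∈ B, ε ^ (j : ℕ) = ∑ k ∈ B.image (Fin.val), ε ^ k := by
      rw [Finset.sum_image (fun a _ b _ h => Fin.val_injective h)]
    have hb3 : B.image (Fin.val) ⊆ Finset.Ico ((j₀ : ℕ) + 1) d := by
      intro k hk
      simp only [Finset.mem_image] at hk
      obtain ⟨j, hj, rfl⟩ := hk
      have : ¬ j ≤ j₀ := (Finset.mem_filter.mp hj).2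
      have : j₀ < j := lt_of_not_ge this
      exact Finset.mem_Ico.mpr ⟨this, j.isLt⟩
    have hb4 : ∑ k ∈ B.image (Fin.val), ε ^ k ≤ ∑ k ∈ Finset.Ico ((j₀ : ℕ) + 1) d, ε ^ k :=
      Finset.sum_le_sum_of_subset_of_nonneg hb3 (fun k _ _ => by positivity)
    have hle : (j₀ : ℕ) + 1 ≤ d := j₀.isLt
    have hgeom : ∑ k ∈ Finset.Ico ((j₀ : ℕ) + 1) d, ε ^ k
        = (ε ^ d - ε ^ ((j₀:ℕ) + 1)) / (ε - 1) := geom_sum_Ico hε1.ne hle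
    have hmain : (n:ℝ) * ((ε ^ d - ε ^ ((j₀:ℕ) + 1)) / (ε - 1))
        = ε ^ (j₀:ℕ) - ((n:ℝ) + 1) * ε ^ d := by
      have hne : (n:ℝ) + 1 ≠ 0 := by linarith
      have hεne : ε - 1 ≠ 0 := sub_ne_zero.mpr hε1.ne
      have h1 : ((n:ℝ) + 1) * ε = 1 := by rw [hεdef]; field_simp
      rw [pow_succ]
      field_simp
      nlinarith [pow_pos hε0 d, pow_pos hε0 (j₀:ℕ)]
    have hpos : (0:ℝ) < ((n:ℝ) + 1) * ε ^ d := by positivity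
    have hn0 : (0:ℝ) ≤ (n:ℝ) := by linarith
    calc ∑ j ∈ B, ε ^ (j : ℕ) * (x j : ℝ)
        ≤ (n:ℝ) * ∑ j ∈ B, ε ^ (j:ℕ) := hb1
      _ = (n:ℝ) * ∑ k ∈ B.image (Fin.val), ε ^ k := by rw [hb2]
      _ ≤ (n:ℝ) * ∑ k ∈ Finset.Ico ((j₀ : ℕ) + 1) d, ε ^ k :=
          mul_le_mul_of_nonneg_left hb4 hn0
      _ = ε ^ (j₀:ℕ) - ((n:ℝ) + 1) * ε ^ d := by rw [hgeom, hmain]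
      _ < ε ^ (j₀:ℕ) := by linarith
  -- Step 4 : combine
  have h4 : ∑ j ∈ A, ε ^ (j : ℕ) * (y j : ℝ) ≤ ∑ j : Fin d, ε ^ (j : ℕ) * (y j : ℝ) := by
    rw [hsplit]
    have : (0:ℝ) ≤ ∑ j ∈ B, ε ^ (j : ℕ) * (y j : ℝ) :=
      Finset.sum_nonneg (fun j _ => by positivity)
    linarith
  rw [hsplit x]
  linarith

private lemma gl_rev {d : ℕ} (ε : ℝ) (x : Fin d → ℕ) :
    ∑ i : Fin d, ε ^ (d - 1 - (i : ℕ)) * (x i : ℝ)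
      = ∑ i : Fin d, ε ^ (i : ℕ) * (x i.rev : ℝ) := by
  refine (Fintype.sum_bijective Fin.rev Fin.rev_bijective _ _ (fun i => ?_)).symm
  have h : d - 1 - ((i.rev : ℕ)) = (i : ℕ) := by
    have := i.isLt; rw [Fin.val_rev]; omega
  rw [h]

/-- The grid-line system `(P_d, L_d)` maps into two dimensions: with `ε = 1/(n+1)` and
`f(x) = (∑ i ε^i x_i, ∑ i ε^(d-1-i) x_i)` (indices `0, …, d-1`), `f` is injective on the
grid `[n]^d`, and a grid point `x` lies on the grid line through `a` in direction `i`
iff `f x` lies in the smallest axis-parallel rectangle containing the image of that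
line's grid points. -/
theorem grid_lines_map_to_plane (d n : ℕ) (hd : 2 ≤ d) (hn : 2 ≤ n) :
    let ε : ℝ := 1 / (n + 1)
    let f : (Fin d → ℕ) → ℝ × ℝ := fun x =>
      (∑ i : Fin d, ε ^ (i : ℕ) * x i, ∑ i : Fin d, ε ^ (d - 1 - (i : ℕ)) * x i)
    let grid : Set (Fin d → ℕ) := {x | ∀ i, 1 ≤ x i ∧ x i ≤ n}
    let onLine : Fin d → (Fin d → ℕ) → (Fin d → ℕ) → Prop :=
      fun i a y => y ∈ grid ∧ ∀ j, j ≠ i → y j = a j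
    Set.InjOn f grid ∧
    ∀ x ∈ grid, ∀ i : Fin d, ∀ a ∈ grid,
      ((∀ j, j ≠ i → x j = a j) ↔
        (sInf ((fun y => (f y).1) '' {y | onLine i a y}) ≤ (f x).1 ∧
         (f x).1 ≤ sSup ((fun y => (f y).1) '' {y | onLine i a y}) ∧
         sInf ((fun y => (f y).2) '' {y | onLine i a y}) ≤ (f x).2 ∧
         (f x).2 ≤ sSup ((fun y => (f y).2) '' {y | onLine i a y}))) := by
  intro ε f grid onLine
  classical
  have hε0 : (0:ℝ) ≤ 1 / ((n:ℝ) + 1) := by positivity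
  have hf1 : ∀ z : Fin d → ℕ,
      (f z).1 = ∑ j : Fin d, (1 / ((n:ℝ) + 1)) ^ (j : ℕ) * (z j : ℝ) := fun z => rfl
  have hf2 : ∀ z : Fin d → ℕ,
      (f z).2 = ∑ j : Fin d, (1 / ((n:ℝ) + 1)) ^ (j : ℕ) * (z j.rev : ℝ) := fun z =>
    gl_rev (1 / ((n:ℝ) + 1)) z
  constructor
  · -- injectivity
    intro x hx y hy hfxy
    by_contra hne
    have hex : ∃ j, x j ≠ y j := by
      by_contra h; push_neg at h; exact hne (funext h)
    set s := Finset.univ.filter (fun j => x j ≠ y j) with hs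
    have hsne : s.Nonempty := by
      obtain ⟨j, hj⟩ := hex; exact ⟨j, by simp [hs, hj]⟩
    set j₀ := s.min' hsne with hj₀def
    have hj₀s : j₀ ∈ s := s.min'_mem hsne
    have hj₀ne : x j₀ ≠ y j₀ := by
      have := Finset.mem_filter.mp hj₀s; exact this.2
    have hagree : ∀ j, j < j₀ → x j = y j := by
      intro j hj
      by_contra h
      have hjs : j ∈ s := by simp [hs, h]
      exact absurd (s.min'_le j hjs) (not_le.mpr hj)
    have h1 : (f x).1 = (f y).1 := by rw [hfxy]
    rw [hf1, hf1] at h1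
    rcases lt_or_gt_of_ne hj₀ne with h | h
    · exact absurd h1 (ne_of_lt (gl_lex hn x y (fun j => (hx j).2) j₀ h hagree))
    · exact absurd h1.symm
        (ne_of_lt (gl_lex hn y x (fun j => (hy j).2) j₀ h (fun j hj => (hagree j hj).symm)))
  · -- rectangle characterization
    intro x hx i a ha
    set y1 := Function.update a i 1 with hy1def
    set yn := Function.update a i n with hyndef
    have hy1g : y1 ∈ grid := by
      intro j
      rcases eq_or_ne j i with rfl | h
      · rw [hy1def, Function.update_self]; exact ⟨le_refl 1, by omega⟩
      · rw [hy1def, Function.update_of_ne h]; exact ha j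
    have hyng : yn ∈ grid := by
      intro j
      rcases eq_or_ne j i with rfl | h
      · rw [hyndef, Function.update_self]; exact ⟨by omega, le_refl n⟩
      · rw [hyndef, Function.update_of_ne h]; exact ha j
    have hy1line : onLine i a y1 := ⟨hy1g, fun j hj => by rw [hy1def, Function.update_of_ne hj]⟩
    have hynline : onLine i a yn := ⟨hyng, fun j hj => by rw [hyndef, Function.update_of_ne hj]⟩
    have hpt1 : ∀ y, onLine i a y → ∀ j, y1 j ≤ y j := by
      intro y hy j
      rcases eq_or_ne j i with rfl | h
      · rw [hy1def, Function.update_self]; exact (hy.1 j).1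
      · rw [hy1def, Function.update_of_ne h, ← hy.2 j h]
    have hptn : ∀ y, onLine i a y → ∀ j, y j ≤ yn j := by
      intro y hy j
      rcases eq_or_ne j i with rfl | h
      · rw [hyndef, Function.update_self]; exact (hy.1 j).2
      · rw [hyndef, Function.update_of_ne h, hy.2 j h]
    -- bounds on the image sets
    have hlb1 : ∀ z ∈ (fun y => (f y).1) '' {y | onLine i a y}, (f y1).1 ≤ z := by
      rintro z ⟨y, hy, rfl⟩
      show (f y1).1 ≤ (f y).1
      rw [hf1, hf1]
      exact gl_mono _ hε0 (fun j => (j:ℕ)) y1 y (hpt1 y hy)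
    have hub1 : ∀ z ∈ (fun y => (f y).1) '' {y | onLine i a y}, z ≤ (f yn).1 := by
      rintro z ⟨y, hy, rfl⟩
      show (f y).1 ≤ (f yn).1
      rw [hf1, hf1]
      exact gl_mono _ hε0 (fun j => (j:ℕ)) y yn (hptn y hy)
    have hlb2 : ∀ z ∈ (fun y => (f y).2) '' {y | onLine i a y}, (f y1).2 ≤ z := by
      rintro z ⟨y, hy, rfl⟩
      show (f y1).2 ≤ (f y).2
      rw [hf2, hf2]
      exact gl_mono _ hε0 (fun j => (j:ℕ)) (fun k => y1 k.rev) (fun k => y k.rev)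
        (fun k => hpt1 y hy k.rev)
    have hub2 : ∀ z ∈ (fun y => (f y).2) '' {y | onLine i a y}, z ≤ (f yn).2 := by
      rintro z ⟨y, hy, rfl⟩
      show (f y).2 ≤ (f yn).2
      rw [hf2, hf2]
      exact gl_mono _ hε0 (fun j => (j:ℕ)) (fun k => y k.rev) (fun k => yn k.rev)
        (fun k => hptn y hy k.rev)
    have hne1 : ((fun y => (f y).1) '' {y | onLine i a y}).Nonempty :=
      ⟨(f y1).1, y1, hy1line, rfl⟩
    have hne2 : ((fun y => (f y).2) '' {y | onLine i a y}).Nonempty :=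
      ⟨(f y1).2, y1, hy1line, rfl⟩
    constructor
    · intro h
      have hxline : onLine i a x := ⟨hx, h⟩
      have hmem1 : (f x).1 ∈ (fun y => (f y).1) '' {y | onLine i a y} := ⟨x, hxline, rfl⟩
      have hmem2 : (f x).2 ∈ (fun y => (f y).2) '' {y | onLine i a y} := ⟨x, hxline, rfl⟩
      exact ⟨csInf_le ⟨(f y1).1, hlb1⟩ hmem1, le_csSup ⟨(f yn).1, hub1⟩ hmem1,
        csInf_le ⟨(f y1).2, hlb2⟩ hmem2, le_csSup ⟨(f yn).2, hub2⟩ hmem2⟩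
    · intro hrect
      by_contra hcon
      push_neg at hcon
      obtain ⟨j, hji, hjne⟩ := hcon
      rcases lt_or_gt_of_ne hji with hlt | hgt
      · -- j < i : first coordinate violated
        set s := Finset.univ.filter (fun j => j < i ∧ x j ≠ a j) with hs
        have hsne : s.Nonempty := ⟨j, by simp [hs, hlt, hjne]⟩
        set j₀ := s.min' hsne with hj₀def
        obtain ⟨hj₀i, hj₀ne⟩ : j₀ < i ∧ x j₀ ≠ a j₀ :=
          (Finset.mem_filter.mp (s.min'_mem hsne)).2
        have hagr : ∀ j', j' < j₀ → x j' = a j' := by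
          intro j' hj'
          by_contra h
          have : j' ∈ s := by simp [hs, hj'.trans hj₀i, h]
          exact absurd (s.min'_le j' this) (not_le.mpr hj')
        rcases lt_or_gt_of_ne hj₀ne with hc | hc
        · have hstrict : (f x).1 < (f y1).1 := by
            rw [hf1, hf1]
            apply gl_lex hn x y1 (fun j' => (hx j').2) j₀
            · rw [hy1def, Function.update_of_ne (ne_of_lt hj₀i)]; exact hc
            · intro j' hj'
              rw [hy1def, Function.update_of_ne (ne_of_lt (hj'.trans hj₀i))]
              exact hagr j' hj'
          have hinf : (f y1).1 ≤ sInf ((fun y => (f y).1) '' {y | onLine i a y}) :=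
            le_csInf hne1 hlb1
          linarith [hrect.1]
        · have hstrict : (f yn).1 < (f x).1 := by
            rw [hf1, hf1]
            apply gl_lex hn yn x (fun j' => (hyng j').2) j₀
            · rw [hyndef, Function.update_of_ne (ne_of_lt hj₀i)]; exact hc
            · intro j' hj'
              rw [hyndef, Function.update_of_ne (ne_of_lt (hj'.trans hj₀i))]
              exact (hagr j' hj').symm
          have hsup : sSup ((fun y => (f y).1) '' {y | onLine i a y}) ≤ (f yn).1 :=
            csSup_le hne1 hub1
          linarith [hrect.2.1]
      · -- i < j : second coordinate violated
        set s := Finset.univ.filter (fun j => i < j ∧ x j ≠ a j) with hs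
        have hsne : s.Nonempty := ⟨j, by simp [hs, hgt, hjne]⟩
        set j₀ := s.max' hsne with hj₀def
        obtain ⟨hj₀i, hj₀ne⟩ : i < j₀ ∧ x j₀ ≠ a j₀ :=
          (Finset.mem_filter.mp (s.max'_mem hsne)).2
        have hagr : ∀ j', j₀ < j' → x j' = a j' := by
          intro j' hj'
          by_contra h
          have : j' ∈ s := by simp [hs, hj₀i.trans hj', h]
          exact absurd (s.le_max' j' this) (not_le.mpr hj')
        rcases lt_or_gt_of_ne hj₀ne with hc | hc
        · have hstrict : (f x).2 < (f y1).2 := by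
            rw [hf2, hf2]
            apply gl_lex hn (fun k => x k.rev) (fun k => y1 k.rev)
              (fun k => (hx k.rev).2) j₀.rev
            · rw [Fin.rev_rev, hy1def, Function.update_of_ne (ne_of_gt hj₀i)]; exact hc
            · intro k hk
              have h1 : j₀ < k.rev := by
                have := Fin.rev_lt_rev.mpr hk; rwa [Fin.rev_rev] at this
              have h2 : k.rev ≠ i := ne_of_gt (hj₀i.trans h1)
              rw [hy1def, Function.update_of_ne h2]
              exact hagr _ h1
          have hinf : (f y1).2 ≤ sInf ((fun y => (f y).2) '' {y | onLine i a y}) :=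
            le_csInf hne2 hlb2
          linarith [hrect.2.2.1]
        · have hstrict : (f yn).2 < (f x).2 := by
            rw [hf2, hf2]
            apply gl_lex hn (fun k => yn k.rev) (fun k => x k.rev)
              (fun k => (hyng k.rev).2) j₀.rev
            · rw [Fin.rev_rev, hyndef, Function.update_of_ne (ne_of_gt hj₀i)]; exact hc
            · intro k hk
              have h1 : j₀ < k.rev := by
                have := Fin.rev_lt_rev.mpr hk; rwa [Fin.rev_rev] at this
              have h2 : k.rev ≠ i := ne_of_gt (hj₀i.trans h1)
              rw [hyndef, Function.update_of_ne h2]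
              exact (hagr _ h1).symm
          have hsup : sSup ((fun y => (f y).2) '' {y | onLine i a y}) ≤ (f yn).2 :=
            csSup_le hne2 hub2
          linarith [hrect.2.2.2]
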